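/- arXiv:0809.1461 — 6 statements merged into one kernel-verified Lean document; each statement's English description precedes it below -/
import Mathlib

section
/- Let Γ be a group and Γ₀ ⊆ Γ a subgroup. For x ∈ Γ set X = Γ₀xΓ₀ and Y = Γ₀x⁻¹Γ₀. Then the fiber of the multiplication map m_{X,Y} over the identity element e ∈ Γ (i.e. the set of Γ₀-orbits of pairs (p,q) ∈ X × Y with pq = e, for the action g·(p,q) = (pg⁻¹, gq)) is in natural bijection with the set of right cosets pΓ₀ contained in X. Consequently, if for all pairs of double cosets X', Y' of Γ₀ every fiber of m_{X',Y'} is finite, then for every x ∈ Γ the double coset Γ₀xΓ₀ is a union of finitely many right cosets of Γ₀. -/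
/-- The double coset `Γ₀ x Γ₀` of `x` with respect to the subgroup `Γ₀`. -/
def doubleCoset {Γ : Type*} [Group Γ] (Γ₀ : Subgroup Γ) (x : Γ) : Set Γ :=
  {g | ∃ a ∈ Γ₀, ∃ b ∈ Γ₀, g = a * x * b}

/-- The orbit relation on the fiber of the multiplication map `m_{X,Y}` over `z`:
`(p, q)` is identified with `(p * g⁻¹, g * q)` for `g ∈ Γ₀`. -/
def fiberRel {Γ : Type*} [Group Γ] (Γ₀ : Subgroup Γ) (X Y : Set Γ) (z : Γ) :
    {pq : Γ × Γ // pq.1 ∈ X ∧ pq.2 ∈ Y ∧ pq.1 * pq.2 = z} →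
    {pq : Γ × Γ // pq.1 ∈ X ∧ pq.2 ∈ Y ∧ pq.1 * pq.2 = z} → Prop :=
  fun p q => ∃ g ∈ Γ₀, q.1.1 = p.1.1 * g⁻¹ ∧ q.1.2 = g * p.1.2

theorem inv_mem_doubleCoset_inv {Γ : Type*} [Group Γ] (Γ₀ : Subgroup Γ) (x g : Γ)
    (hg : g ∈ doubleCoset Γ₀ x) : g⁻¹ ∈ doubleCoset Γ₀ x⁻¹ := by
  obtain ⟨a, ha, b, hb, rfl⟩ := hg
  exact ⟨b⁻¹, Γ₀.inv_mem hb, a⁻¹, Γ₀.inv_mem ha, by group⟩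

noncomputable def stmt2_equiv {Γ : Type*} [Group Γ] (Γ₀ : Subgroup Γ) (x : Γ) :
    Quot (fiberRel Γ₀ (doubleCoset Γ₀ x) (doubleCoset Γ₀ x⁻¹) 1) ≃
      ↥((QuotientGroup.mk (s := Γ₀)) '' doubleCoset Γ₀ x) := by
  refine Equiv.ofBijective
    (Quot.lift (fun pq => (⟨QuotientGroup.mk pq.1.1, ⟨pq.1.1, pq.2.1, rfl⟩⟩ :
        ↥((QuotientGroup.mk (s := Γ₀)) '' doubleCoset Γ₀ x))) ?_) ⟨?_, ?_⟩
  · rintro a b ⟨g, hg, h1, h2⟩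
    refine Subtype.ext ?_
    simp only [h1]
    exact (QuotientGroup.eq.mpr (by simpa using Γ₀.inv_mem hg)).symm
  · intro a b
    induction a using Quot.ind with | _ a =>
    induction b using Quot.ind with | _ b =>
    intro h
    have h' : QuotientGroup.mk (s := Γ₀) a.1.1 = QuotientGroup.mk b.1.1 :=
      congrArg Subtype.val h
    have hmem : a.1.1⁻¹ * b.1.1 ∈ Γ₀ := QuotientGroup.eq.mp h'
    refine Quot.sound ⟨b.1.1⁻¹ * a.1.1, by simpa using Γ₀.inv_mem hmem, ?_, ?_⟩
    · group
    · have ha : a.1.2 = a.1.1⁻¹ := by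
        exact eq_inv_of_mul_eq_one_right a.2.2.2
      have hb : b.1.2 = b.1.1⁻¹ := by
        exact eq_inv_of_mul_eq_one_right b.2.2.2
      rw [ha, hb]; group
  · rintro ⟨c, g, hg, rfl⟩
    exact ⟨Quot.mk _ ⟨(g, g⁻¹), hg, inv_mem_doubleCoset_inv Γ₀ x g hg, mul_inv_cancel g⟩, rfl⟩

/-- For `X = Γ₀xΓ₀` and `Y = Γ₀x⁻¹Γ₀`, the fiber of `m_{X,Y}` over the identity is in natural
bijection with the set of right cosets `pΓ₀` contained in `X` (i.e. the image of `X` in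
`Γ ⧸ Γ₀`).  Consequently, if all fibers of all multiplication maps between double cosets are
finite, then every double coset is a finite union of right cosets of `Γ₀`. -/
theorem stmt2 {Γ : Type*} [Group Γ] (Γ₀ : Subgroup Γ) :
    (∀ x : Γ,
      Nonempty (Quot (fiberRel Γ₀ (doubleCoset Γ₀ x) (doubleCoset Γ₀ x⁻¹) 1) ≃
        ↥((QuotientGroup.mk (s := Γ₀)) '' doubleCoset Γ₀ x))) ∧
    ((∀ x y z : Γ, Finite (Quot (fiberRel Γ₀ (doubleCoset Γ₀ x) (doubleCoset Γ₀ y) z))) →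
      ∀ x : Γ, ((QuotientGroup.mk (s := Γ₀)) '' doubleCoset Γ₀ x).Finite) := by
  refine ⟨fun x => ⟨stmt2_equiv Γ₀ x⟩, fun h x => ?_⟩
  have := h x x⁻¹ 1
  have : Finite ↥((QuotientGroup.mk (s := Γ₀)) '' doubleCoset Γ₀ x) :=
    Finite.of_equiv _ (stmt2_equiv Γ₀ x)
  exact Set.toFinite _
end

section
/- Let Λ be an abelian group and b : Λ × Λ → ℤ a biadditive form. Then the multiplication (a₁,λ₁,μ₁,k₁)·(a₂,λ₂,μ₂,k₂) = (a₁ + a₂ + b(λ₁,μ₂) − b(μ₁,λ₂) + k₁·b(λ₁,λ₂), λ₁ + λ₂, μ₁ + μ₂ + k₁·λ₂, k₁ + k₂) makes the set ℤ × Λ × Λ × ℤ into a group: it is associative, (0,0,0,0) is a two-sided identity, and every element has a two-sided inverse. -/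
/-- The multiplication on `Γ̃ = ℤ × Λ × Λ × ℤ`:
`(a₁,λ₁,μ₁,k₁)·(a₂,λ₂,μ₂,k₂) = (a₁+a₂+b(λ₁,μ₂)−b(μ₁,λ₂)+k₁·b(λ₁,λ₂), λ₁+λ₂, μ₁+μ₂+k₁·λ₂, k₁+k₂)`. -/
def gtMul {Λ : Type*} [AddCommGroup Λ] (b : Λ → Λ → ℤ) :
    ℤ × Λ × Λ × ℤ → ℤ × Λ × Λ × ℤ → ℤ × Λ × Λ × ℤ :=
  fun p q =>
    (p.1 + q.1 + b p.2.1 q.2.2.1 - b p.2.2.1 q.2.1 + p.2.2.2 * b p.2.1 q.2.1,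
     p.2.1 + q.2.1,
     p.2.2.1 + q.2.2.1 + p.2.2.2 • q.2.1,
     p.2.2.2 + q.2.2.2)

/-- The multiplication `gtMul b` makes `ℤ × Λ × Λ × ℤ` into a group: it is associative,
`(0,0,0,0)` is a two-sided identity, and every element has a two-sided inverse. -/
theorem stmt5 {Λ : Type*} [AddCommGroup Λ] (b : Λ → Λ → ℤ)
    (hbl : ∀ l₁ l₂ m : Λ, b (l₁ + l₂) m = b l₁ m + b l₂ m)
    (hbr : ∀ l m₁ m₂ : Λ, b l (m₁ + m₂) = b l m₁ + b l m₂) :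
    (∀ p q r : ℤ × Λ × Λ × ℤ, gtMul b (gtMul b p q) r = gtMul b p (gtMul b q r)) ∧
    (∀ p : ℤ × Λ × Λ × ℤ, gtMul b (0, 0, 0, 0) p = p ∧ gtMul b p (0, 0, 0, 0) = p) ∧
    (∀ p : ℤ × Λ × Λ × ℤ, ∃ q : ℤ × Λ × Λ × ℤ,
      gtMul b p q = (0, 0, 0, 0) ∧ gtMul b q p = (0, 0, 0, 0)) := by
  -- package `b` as additive homs in each variable
  have hzl : ∀ m, b 0 m = 0 := fun m => by
    have := hbl 0 0 m; simpa using this.symm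
  have hzr : ∀ l, b l 0 = 0 := fun l => by
    have := hbr l 0 0; simpa using this.symm
  have hsl : ∀ (k : ℤ) (l m : Λ), b (k • l) m = k * b l m := by
    intro k l m
    have := map_zsmul (AddMonoidHom.mk' (fun l => b l m) (fun a c => hbl a c m)) k l
    simpa [smul_eq_mul] using this
  have hsr : ∀ (k : ℤ) (l m : Λ), b l (k • m) = k * b l m := by
    intro k l m
    have := map_zsmul (AddMonoidHom.mk' (fun m => b l m) (fun a c => hbr l a c)) k m
    simpa [smul_eq_mul] using this
  have hnl : ∀ l m : Λ, b (-l) m = -b l m := by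
    intro l m; have := hsl (-1) l m; simpa using this
  have hnr : ∀ l m : Λ, b l (-m) = -b l m := by
    intro l m; have := hsr (-1) l m; simpa using this
  refine ⟨?_, ?_, ?_⟩
  · rintro ⟨a₁, l₁, m₁, k₁⟩ ⟨a₂, l₂, m₂, k₂⟩ ⟨a₃, l₃, m₃, k₃⟩
    simp only [gtMul, Prod.mk.injEq, hbl, hbr, hsl, hsr]
    refine ⟨by ring, by abel, ?_, by ring⟩
    simp [add_smul, smul_add]
    abel
  · rintro ⟨a, l, m, k⟩
    constructor <;> simp [gtMul, hzl, hzr]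
  · rintro ⟨a, l, m, k⟩
    refine ⟨(-a + b l m - b m l, -l, -m + k • l, -k), ?_, ?_⟩ <;>
      · simp only [gtMul, Prod.mk.injEq, hbl, hbr, hsl, hsr, hnl, hnr]
        refine ⟨by ring, by abel, ?_, by ring⟩
        simp [smul_add]
end

section
/- Let Λ be an abelian group, b : Λ × Λ → ℤ biadditive, Γ̃ the group ℤ × Λ × Λ × ℤ with multiplication (a₁,λ₁,μ₁,k₁)·(a₂,λ₂,μ₂,k₂) = (a₁+a₂+b(λ₁,μ₂)−b(μ₁,λ₂)+k₁b(λ₁,λ₂), λ₁+λ₂, μ₁+μ₂+k₁λ₂, k₁+k₂), and Γ̃₀ = {(0,λ,0,0) : λ ∈ Λ}. Fix k ∈ ℤ. Then (i) the assignment ν·(a,μ) = (a − b(ν,μ) − b(μ,ν) − k·b(ν,ν), μ + kν) defines an action of the additive group Λ on the set ℤ × Λ, and (ii) the map (a,μ) ↦ Γ̃₀·(a,0,μ,k)·Γ̃₀ induces a bijection from the orbit set (ℤ × Λ)/Λ of this action onto the set of Γ̃₀-double cosets of elements of Γ̃ whose last coordinate equals k. -/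
/-- For fixed `k`, the assignment `ν·(a,μ) = (a − b(ν,μ) − b(μ,ν) − k·b(ν,ν), μ + kν)`. -/
def actK {Λ : Type*} [AddCommGroup Λ] (b : Λ → Λ → ℤ) (k : ℤ) :
    Λ → ℤ × Λ → ℤ × Λ :=
  fun ν p => (p.1 - b ν p.2 - b p.2 ν - k * b ν ν, p.2 + k • ν)

/-- (i) `actK b k` is an action of the additive group `Λ` on `ℤ × Λ`, and (ii) the map
`(a,μ) ↦ Γ̃₀·(a,0,μ,k)·Γ̃₀` induces a bijection from the orbit set of this action onto the set of
`Γ̃₀`-double cosets of elements of `Γ̃` whose last coordinate equals `k`. -/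
theorem stmt8 {Λ : Type*} [AddCommGroup Λ] (b : Λ → Λ → ℤ)
    (hbl : ∀ l₁ l₂ m : Λ, b (l₁ + l₂) m = b l₁ m + b l₂ m)
    (hbr : ∀ l m₁ m₂ : Λ, b l (m₁ + m₂) = b l m₁ + b l m₂)
    (k : ℤ) :
    ((∀ p : ℤ × Λ, actK b k 0 p = p) ∧
      (∀ (ν ν' : Λ) (p : ℤ × Λ), actK b k (ν + ν') p = actK b k ν (actK b k ν' p))) ∧
    ∃ e : Quot (fun p q : ℤ × Λ => ∃ ν : Λ, q = actK b k ν p) ≃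
        Quot (fun g g' : {g : ℤ × Λ × Λ × ℤ // g.2.2.2 = k} =>
          ∃ ν₁ ν₂ : Λ, (g' : ℤ × Λ × Λ × ℤ) =
            gtMul b (gtMul b ((0 : ℤ), ν₁, (0 : Λ), (0 : ℤ)) (g : ℤ × Λ × Λ × ℤ))
              ((0 : ℤ), ν₂, (0 : Λ), (0 : ℤ))),
      ∀ (a : ℤ) (μ : Λ),
        e (Quot.mk _ (a, μ)) = Quot.mk _ ⟨(a, (0 : Λ), μ, k), rfl⟩ := by
  have hb0l : ∀ m : Λ, b 0 m = 0 := fun m => by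
    have h := hbl 0 0 m; simp only [add_zero] at h; linarith
  have hb0r : ∀ l : Λ, b l 0 = 0 := fun l => by
    have h := hbr l 0 0; simp only [add_zero] at h; linarith
  have hbnl : ∀ l m : Λ, b (-l) m = - b l m := fun l m => by
    have h := hbl l (-l) m; simp only [add_neg_cancel, hb0l] at h; linarith
  have hbsl : ∀ (n : ℤ) (l m : Λ), b (n • l) m = n * b l m := fun n l m => by
    have h := map_zsmul (AddMonoidHom.mk' (fun l => b l m) (fun a c => hbl a c m)) n l
    simpa using h
  have hbsr : ∀ (n : ℤ) (l m : Λ), b l (n • m) = n * b l m := fun n l m => by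
    have h := map_zsmul (AddMonoidHom.mk' (b l) (hbr l)) n m
    simpa using h
  set R := fun p q : ℤ × Λ => ∃ ν : Λ, q = actK b k ν p with hR
  set S := fun g g' : {g : ℤ × Λ × Λ × ℤ // g.2.2.2 = k} =>
      ∃ ν₁ ν₂ : Λ, (g' : ℤ × Λ × Λ × ℤ) =
        gtMul b (gtMul b ((0 : ℤ), ν₁, (0 : Λ), (0 : ℤ)) (g : ℤ × Λ × Λ × ℤ))
          ((0 : ℤ), ν₂, (0 : Λ), (0 : ℤ)) with hS
  constructor
  · constructor
    · intro p
      simp [actK, hb0l, hb0r]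
    · intro ν ν' p
      simp only [actK, Prod.mk.injEq, hbl, hbr, hbsl, hbsr, smul_add]
      constructor
      · ring
      · module
  · -- part (ii)
    have hfwd : ∀ p q : ℤ × Λ, R p q →
        Quot.mk S ⟨(p.1, 0, p.2, k), rfl⟩ = Quot.mk S ⟨(q.1, 0, q.2, k), rfl⟩ := by
      rintro ⟨a, μ⟩ ⟨a', μ'⟩ ⟨ν, hq⟩
      apply Quot.sound
      refine ⟨-ν, ν, ?_⟩
      obtain ⟨h1, h2⟩ := Prod.mk.injEq .. ▸ hq
      simp only [actK] at h1 h2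
      simp only [gtMul, h1, h2, hb0l, hb0r, hbnl, hbl, hbr, hbsl, hbsr, Prod.mk.injEq,
        zero_smul, smul_zero, add_zero, zero_add, neg_add_cancel, zero_mul, mul_zero]
      exact ⟨by ring, trivial⟩
    have hbwd : ∀ g g' : {g : ℤ × Λ × Λ × ℤ // g.2.2.2 = k}, S g g' →
        Quot.mk R (g.1.1 - b g.1.2.1 g.1.2.2.1, g.1.2.2.1)
          = Quot.mk R (g'.1.1 - b g'.1.2.1 g'.1.2.2.1, g'.1.2.2.1) := by
      rintro ⟨⟨a, l, μ, k'⟩, hk⟩ ⟨⟨a', l', μ', k''⟩, hk'⟩ ⟨ν₁, ν₂, h⟩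
      simp only at hk hk'; subst hk
      simp only [gtMul, Prod.mk.injEq, hb0l, hb0r, zero_smul, smul_zero, add_zero, zero_add,
        zero_mul, mul_zero] at h
      obtain ⟨h1, h2, h3, -⟩ := h
      apply Quot.sound
      refine ⟨ν₂, ?_⟩
      simp only [actK, Prod.mk.injEq, h1, h2, h3, hbl, hbr, hbsl, hbsr]
      exact ⟨by ring, trivial⟩
    refine ⟨⟨Quot.lift (fun p => Quot.mk S ⟨(p.1, 0, p.2, k), rfl⟩) hfwd,
      Quot.lift (fun g => Quot.mk R (g.1.1 - b g.1.2.1 g.1.2.2.1, g.1.2.2.1)) hbwd,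
      ?_, ?_⟩, fun a μ => rfl⟩
    · apply Quot.ind
      rintro ⟨a, μ⟩
      simp [hb0l]
    · apply Quot.ind
      rintro ⟨⟨a, l, μ, k'⟩, hk⟩
      refine (Quot.sound ⟨-l, 0, ?_⟩).symm
      simp only [gtMul, Prod.mk.injEq, hb0l, hb0r, hbnl, zero_smul, smul_zero, add_zero,
        zero_add, zero_mul, mul_zero, neg_add_cancel]
      exact ⟨by ring, trivial, trivial, hk.symm⟩
end

section
/- Let b : ℤ^l × ℤ^l → ℤ be a ℤ-bilinear form such that Q(λ,μ) = b(λ,μ) + b(μ,λ) is negative definite. Fix an integer k ≥ 1 and consider the action of ℤ^l on ℤ × ℤ^l given by ν·(a,μ) = (a − b(ν,μ) − b(μ,ν) − k·b(ν,ν), μ + kν). Then for every (a₀,μ₀) ∈ ℤ × ℤ^l: (i) there exists A ∈ ℤ such that every point (a,μ) in the ℤ^l-orbit of (a₀,μ₀) satisfies a ≥ A; and (ii) for every fixed a ∈ ℤ, the set of μ ∈ ℤ^l with (a,μ) in the orbit of (a₀,μ₀) is finite. -/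
/-- Let `b` be a `ℤ`-bilinear form on `ℤ^l` with `Q(λ,μ) = b(λ,μ) + b(μ,λ)` negative definite,
and let `k ≥ 1`.  For the action `ν·(a,μ) = (a − b(ν,μ) − b(μ,ν) − k·b(ν,ν), μ + kν)` of `ℤ^l`
on `ℤ × ℤ^l`: (i) on each orbit the first coordinate is bounded below, and (ii) for each fixed
`a`, only finitely many `μ` occur with `(a,μ)` in a given orbit. -/
theorem stmt12 {l : ℕ} (b : (Fin l → ℤ) →ₗ[ℤ] (Fin l → ℤ) →ₗ[ℤ] ℤ)
    (hneg : ∀ ν : Fin l → ℤ, ν ≠ 0 → b ν ν + b ν ν < 0)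
    (k : ℤ) (hk : 1 ≤ k) (a₀ : ℤ) (μ₀ : Fin l → ℤ) :
    (∃ A : ℤ, ∀ (a : ℤ) (μ : Fin l → ℤ),
        (∃ ν : Fin l → ℤ,
          (a, μ) = (a₀ - b ν μ₀ - b μ₀ ν - k * b ν ν, μ₀ + k • ν)) → A ≤ a) ∧
    ∀ a : ℤ, {μ : Fin l → ℤ | ∃ ν : Fin l → ℤ,
        (a, μ) = (a₀ - b ν μ₀ - b μ₀ ν - k * b ν ν, μ₀ + k • ν)}.Finite := by
  -- every diagonal value is nonpositive
  have hd : ∀ ν : Fin l → ℤ, b ν ν ≤ 0 := by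
    intro ν
    by_cases h : ν = 0
    · simp [h]
    · have := hneg ν h; omega
  -- integer Cauchy–Schwarz for the (negated) symmetrized form
  have hCS : ∀ x y : Fin l → ℤ, (b x y + b y x)^2 ≤ 4 * (b x x * b y y) := by
    intro x y
    by_cases hx : x = 0
    · simp [hx]
    · have hc : b x x + b x x < 0 := hneg x hx
      have hE : b ((-(b x x + b x x)) • y + (b x y + b y x) • x)
          ((-(b x x + b x x)) • y + (b x y + b y x) • x) ≤ 0 := hd _
      have hexp : b ((-(b x x + b x x)) • y + (b x y + b y x) • x)
          ((-(b x x + b x x)) • y + (b x y + b y x) • x)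
          = (-(b x x + b x x))*(-(b x x + b x x))*(b y y)
            + (-(b x x + b x x))*(b x y + b y x)*(b y x + b x y)
            + (b x y + b y x)*(b x y + b y x)*(b x x) := by
        simp only [map_add, map_smul, LinearMap.add_apply, LinearMap.smul_apply, smul_eq_mul]
        ring
      rw [hexp] at hE
      nlinarith [sq_nonneg (b x y + b y x), hc]
  constructor
  · -- (i) bounded below
    refine ⟨a₀ + (b μ₀ μ₀ + b μ₀ μ₀), ?_⟩
    rintro a μ ⟨ν, h⟩
    rw [Prod.mk.injEq] at h
    obtain ⟨h1, -⟩ := h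
    have habs : b ν μ₀ + b μ₀ ν ≤ -(b ν ν + b μ₀ μ₀) := by
      nlinarith [hCS ν μ₀, hd ν, hd μ₀, sq_nonneg (b ν ν - b μ₀ μ₀),
        sq_nonneg (b ν μ₀ + b μ₀ ν + b ν ν + b μ₀ μ₀)]
    have hkν : 0 ≤ (k - 1) * (-(b ν ν)) :=
      mul_nonneg (by linarith) (by linarith [hd ν])
    linarith [hd ν, hd μ₀]
  · -- (ii) finiteness
    intro a
    set D : ℤ := 8 * |b μ₀ μ₀| + 4 * |a₀ - a| with hD
    set M : Fin l → ℤ := fun i => D - 2 * b (Pi.single i 1) (Pi.single i 1) with hM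
    set F : (Fin l → ℤ) → (Fin l → ℤ) :=
      fun ν i => b ν (Pi.single i 1) + b (Pi.single i 1) ν with hF
    -- F is injective
    have hFinj : Function.Injective F := by
      intro x y hxy
      set δ : Fin l → ℤ := x - y with hδ
      have hzero : ∀ i, b δ (Pi.single i 1) + b (Pi.single i 1) δ = 0 := by
        intro i
        have := congrFun hxy i
        simp only [hF] at this
        simp only [hδ, map_sub, LinearMap.sub_apply]
        omega
      have hsum : b δ δ + b δ δ = ∑ i, δ i * (b δ (Pi.single i 1) + b (Pi.single i 1) δ) := by
        have hrep : δ = ∑ i, δ i • Pi.single i (1:ℤ) := by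
          ext j; simp [Finset.sum_apply, Pi.single_apply]
        have h1 : b δ δ = ∑ i, δ i * b δ (Pi.single i 1) := by
          nth_rewrite 2 [hrep]
          rw [map_sum]
          simp only [map_smul, smul_eq_mul]
        have h2 : b δ δ = ∑ i, δ i * b (Pi.single i 1) δ := by
          nth_rewrite 1 [hrep]
          rw [map_sum, LinearMap.sum_apply]
          simp only [map_smul, LinearMap.smul_apply, smul_eq_mul]
        nth_rewrite 1 [h1]
        rw [h2, ← Finset.sum_add_distrib]
        simp [mul_add]
      have hzz : b δ δ + b δ δ = 0 := by
        rw [hsum]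
        exact Finset.sum_eq_zero fun i _ => by rw [hzero i, mul_zero]
      have hδ0 : δ = 0 := by
        by_contra h
        exact absurd hzz (by have := hneg δ h; omega)
      have : x - y = 0 := hδ0
      linear_combination (norm := abel) this  -- x = y
    -- main inclusion
    refine Set.Finite.subset (((Set.finite_Icc (-M) M).preimage
      hFinj.injOn).image (fun ν => μ₀ + k • ν)) ?_
    rintro μ ⟨ν, h⟩
    rw [Prod.mk.injEq] at h
    obtain ⟨h1, h2⟩ := h
    refine ⟨ν, ?_, h2.symm⟩
    -- bound on q ν = -(b ν ν + b ν ν)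
    have habs2 : 2*(b ν μ₀ + b μ₀ ν) ≤ -(b ν ν) - 4*(b μ₀ μ₀) := by
      nlinarith [hCS ν μ₀, hd ν, hd μ₀, sq_nonneg (b ν ν - 4*b μ₀ μ₀),
        sq_nonneg (2*(b ν μ₀ + b μ₀ ν) + b ν ν + 4*b μ₀ μ₀)]
    have hkν : 0 ≤ (k - 1) * (-(b ν ν)) :=
      mul_nonneg (by linarith) (by linarith [hd ν])
    have hqD : -(b ν ν + b ν ν) ≤ D := by
      rw [hD]
      have hc1 : -|a₀ - a| ≤ a₀ - a := neg_abs_le _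
      have hc2 : a₀ - a ≤ |a₀ - a| := le_abs_self _
      have hm1 : -|b μ₀ μ₀| ≤ b μ₀ μ₀ := neg_abs_le _
      linarith [habs2, hkν, hd ν, hd μ₀, h1]
    have hD0 : 0 ≤ D := by linarith [hd ν, hqD]
    -- coordinatewise bound on F ν
    simp only [Set.mem_preimage, Set.mem_Icc, Pi.le_def, Pi.neg_apply]
    constructor <;> intro i <;>
    · have hcs := hCS ν (Pi.single i 1)
      have hdi := hd (Pi.single i 1)
      simp only [hF, hM]
      nlinarith [hd ν, hqD, hD0, hdi, hcs,
        sq_nonneg (b ν (Pi.single i 1) + b (Pi.single i 1) ν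
          + (D - 2 * b (Pi.single i 1) (Pi.single i 1))),
        sq_nonneg (b ν (Pi.single i 1) + b (Pi.single i 1) ν
          - (D - 2 * b (Pi.single i 1) (Pi.single i 1)))]
end

section
/- Let b : ℤ^l × ℤ^l → ℤ be a ℤ-bilinear form such that Q(λ,μ) = b(λ,μ) + b(μ,λ) is negative definite. Let Γ̃ be the group ℤ × ℤ^l × ℤ^l × ℤ with multiplication (a₁,λ₁,μ₁,k₁)·(a₂,λ₂,μ₂,k₂) = (a₁+a₂+b(λ₁,μ₂)−b(μ₁,λ₂)+k₁b(λ₁,λ₂), λ₁+λ₂, μ₁+μ₂+k₁λ₂, k₁+k₂), let Γ̃₀ = {(0,λ,0,0)}, let Γ̃⁺ = {(a,λ,0,0) : a ∈ ℤ, λ ∈ ℤ^l} ∪ {(a,λ,μ,k) : k > 0}, and let c = (1,0,0,0) (a central element). Then Γ̃⁺ is a subsemigroup of Γ̃ containing Γ̃₀, and the pair (Γ̃⁺, Γ̃₀) is almost good; that is, for any x, y ∈ Γ̃⁺ with X = Γ̃₀xΓ̃₀ and Y = Γ̃₀yΓ̃₀: (1') there is a finite subset F ⊆ Γ̃⁺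 such that every product pq with p ∈ X, q ∈ Y lies in Γ̃₀·cⁿ·f·Γ̃₀ for some integer n ≥ 0 and some f ∈ F; and (2) for every z ∈ Γ̃, the set of Γ̃₀-orbits of pairs (p,q) ∈ X × Y with pq = z (for the action g·(p,q) = (pg⁻¹, gq)) is finite. -/
/-- Membership in the subgroup `Γ̃₀ = {(0,ν,0,0) : ν ∈ Λ}`. -/
def isGamma0 {Λ : Type*} [AddCommGroup Λ] (g : ℤ × Λ × Λ × ℤ) : Prop :=
  ∃ ν : Λ, g = ((0 : ℤ), ν, (0 : Λ), (0 : ℤ))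

/-- Membership in the sub-semigroup `Γ̃⁺ = {(a,λ,0,0)} ∪ {(a,λ,μ,k) : k > 0}`. -/
def isPlus {Λ : Type*} [AddCommGroup Λ] (g : ℤ × Λ × Λ × ℤ) : Prop :=
  (∃ (a : ℤ) (lam : Λ), g = (a, lam, (0 : Λ), (0 : ℤ))) ∨ 0 < g.2.2.2

/-- The double coset `Γ̃₀ · x · Γ̃₀`. -/
def dcoset {Λ : Type*} [AddCommGroup Λ] (b : Λ → Λ → ℤ) (x : ℤ × Λ × Λ × ℤ) :
    Set (ℤ × Λ × Λ × ℤ) :=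
  {p | ∃ ν₁ ν₂ : Λ,
    p = gtMul b (gtMul b ((0 : ℤ), ν₁, (0 : Λ), (0 : ℤ)) x) ((0 : ℤ), ν₂, (0 : Λ), (0 : ℤ))}

/-- The `Γ̃₀`-orbit relation on the fiber of the multiplication map over `z`:
`(p, q)` is identified with `(p·g⁻¹, g·q)` for `g = (0,ν,0,0) ∈ Γ̃₀`. -/
def gtFiberRel {Λ : Type*} [AddCommGroup Λ] (b : Λ → Λ → ℤ)
    (X Y : Set (ℤ × Λ × Λ × ℤ)) (z : ℤ × Λ × Λ × ℤ) :
    {pq : (ℤ × Λ × Λ × ℤ) × (ℤ × Λ × Λ × ℤ) //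
        pq.1 ∈ X ∧ pq.2 ∈ Y ∧ gtMul b pq.1 pq.2 = z} →
    {pq : (ℤ × Λ × Λ × ℤ) × (ℤ × Λ × Λ × ℤ) //
        pq.1 ∈ X ∧ pq.2 ∈ Y ∧ gtMul b pq.1 pq.2 = z} → Prop :=
  fun p q => ∃ ν : Λ,
    q.1.1 = gtMul b p.1.1 ((0 : ℤ), -ν, (0 : Λ), (0 : ℤ)) ∧
    q.1.2 = gtMul b ((0 : ℤ), ν, (0 : Λ), (0 : ℤ)) p.1.2


namespace Stmt13Aux
open Matrix

lemma mk4_eq {α β γ δ : Type*} {a a' : α} {b b' : β} {c c' : γ} {d d' : δ}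
    (h1 : a = a') (h2 : b = b') (h3 : c = c') (h4 : d = d') :
    (a, b, c, d) = (a', b', c', d') := by subst h1 h2 h3 h4; rfl
section Quadratic

variable {l : ℕ}

/-- standard basis vector -/
@[simp] def ee (i : Fin l) : Fin l → ℤ := fun j => if i = j then 1 else 0

variable (B : (Fin l → ℤ) →ₗ[ℤ] (Fin l → ℤ) →ₗ[ℤ] ℤ)

lemma B_expand (u v : Fin l → ℤ) :
    B u v = ∑ i, ∑ j, u i * v j * B (ee i) (ee j) := by
  conv_lhs => rw [pi_eq_sum_univ u, pi_eq_sum_univ v]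
  simp only [map_sum, _root_.map_smul, LinearMap.sum_apply, LinearMap.smul_apply, smul_eq_mul,
    Finset.mul_sum]
  rw [Finset.sum_comm]
  exact Finset.sum_congr rfl fun i _ => Finset.sum_congr rfl fun j _ => by
    show _ = u i * v j * B (fun j => if i = j then 1 else 0) (fun k => if j = k then 1 else 0)
    ring

/-- the negated symmetrization -/
def Psym (u v : Fin l → ℤ) : ℤ := -B u v - B v u

variable (hneg : ∀ ν : Fin l → ℤ, ν ≠ 0 → B ν ν + B ν ν < 0)
include hneg

lemma Psym_pos {ν : Fin l → ℤ} (hν : ν ≠ 0) : 0 < Psym B ν ν := by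
  have := hneg ν hν; unfold Psym; linarith

lemma Psym_nonneg (ν : Fin l → ℤ) : 0 ≤ Psym B ν ν := by
  by_cases h : ν = 0
  · simp [h, Psym]
  · exact (Psym_pos B hneg h).le

lemma Psym_cs (u v : Fin l → ℤ) : Psym B u v ^ 2 ≤ Psym B u u * Psym B v v := by
  by_cases hv : v = 0
  · simp [hv, Psym]
  · have hvv := Psym_pos B hneg hv
    have key : 0 ≤ Psym B (Psym B v v • u - Psym B u v • v) (Psym B v v • u - Psym B u v • v) :=
      Psym_nonneg B hneg _
    have expand : Psym B (Psym B v v • u - Psym B u v • v) (Psym B v v • u - Psym B u v • v)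
        = Psym B v v * (Psym B u u * Psym B v v - Psym B u v ^ 2) := by
      simp only [Psym, map_sub, _root_.map_smul, LinearMap.sub_apply, LinearMap.smul_apply,
        smul_eq_mul]
      ring
    rw [expand] at key
    have := (mul_le_mul_iff_right₀ hvv).mp (by linarith : Psym B v v * 0 ≤ Psym B v v *
      (Psym B u u * Psym B v v - Psym B u v ^ 2))
    linarith

omit hneg in
lemma Psym_expand (u v : Fin l → ℤ) :
    Psym B u v = ∑ i, ∑ j, u i * v j * Psym B (ee i) (ee j) := by
  have h2 : B v u = ∑ i, ∑ j, u i * v j * B (ee j) (ee i) := by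
    rw [B_expand B v u, Finset.sum_comm]
    exact Finset.sum_congr rfl fun i _ => Finset.sum_congr rfl fun j _ => by ring
  rw [Psym, B_expand B u v, h2, ← Finset.sum_neg_distrib, ← Finset.sum_sub_distrib]
  refine Finset.sum_congr rfl fun i _ => ?_
  rw [← Finset.sum_neg_distrib, ← Finset.sum_sub_distrib]
  refine Finset.sum_congr rfl fun j _ => ?_
  unfold Psym; ring

/-- Gram matrix of the positive definite form -/
def MM : Matrix (Fin l) (Fin l) ℤ := Matrix.of fun i j => Psym B (ee i) (ee j)

omit hneg in
lemma mulVec_MM (w : Fin l → ℤ) (j : Fin l) : (MM B *ᵥ w) j = Psym B (ee j) w := by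
  have h : Psym B (ee j) w = ∑ b, w b * Psym B (ee j) (ee b) := by
    rw [Psym_expand B (ee j) w, Finset.sum_comm]
    refine Finset.sum_congr rfl fun b _ => ?_
    rw [Finset.sum_eq_single j]
    · simp [ee]
    · intro a _ ha
      have : ee j a = 0 := by simp [ee, (Ne.symm ha : ¬ j = a)]
      rw [this]; ring
    · simp
  rw [h]
  simp only [Matrix.mulVec, dotProduct, MM, Matrix.of_apply]
  exact Finset.sum_congr rfl fun b _ => by ring

lemma detMM_ne : (MM B).det ≠ 0 := by
  intro h
  have hQ : ((MM (l := l) B).map (Int.cast : ℤ → ℚ)).det = 0 := by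
    have h2 := (RingHom.map_det (Int.castRingHom ℚ) (MM (l := l) B)).symm
    rw [RingHom.mapMatrix_apply, h] at h2
    simpa using h2
  obtain ⟨v, hv0, hv⟩ := Matrix.exists_mulVec_eq_zero_iff.mpr hQ
  classical
  set d : ℤ := ∏ i, ((v i).den : ℤ) with hd_def
  have hdpos : 0 < d := Finset.prod_pos fun i _ => by exact_mod_cast (v i).den_pos
  set u : Fin l → ℤ := fun i => (v i).num * (d / ((v i).den : ℤ)) with hu_def
  have hcast : ∀ i, (u i : ℚ) = v i * (d : ℚ) := by
    intro i
    have hdvd : ((v i).den : ℤ) ∣ d := Finset.dvd_prod_of_mem _ (Finset.mem_univ i)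
    obtain ⟨c, hc⟩ := hdvd
    have hden : ((v i).den : ℤ) ≠ 0 := by exact_mod_cast (v i).den_pos.ne'
    have h1 : d / ((v i).den : ℤ) = c := by rw [hc]; exact Int.mul_ediv_cancel_left _ hden
    have h2 : v i * (d : ℚ) = ((v i) * ((v i).den : ℚ)) * (c : ℚ) := by
      rw [mul_assoc]; congr 1
      rw [← Int.cast_natCast, ← Int.cast_mul, ← hc]
    rw [hu_def]
    simp only [h1, h2, Rat.mul_den_eq_num]
    push_cast
    ring
  have hu0 : u ≠ 0 := by
    intro h0
    apply hv0
    funext i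
    have := hcast i
    rw [h0] at this
    simp only [Pi.zero_apply, Int.cast_zero] at this
    have hd0 : (d : ℚ) ≠ 0 := by exact_mod_cast hdpos.ne'
    have := (mul_eq_zero.mp this.symm).resolve_right hd0
    simpa using this
  have hMu : MM (l := l) B *ᵥ u = 0 := by
    funext i
    have hQi : ((MM (l := l) B).map (Int.cast : ℤ → ℚ) *ᵥ (fun j => (u j : ℚ))) i = 0 := by
      have : (fun j => (u j : ℚ)) = fun j => v j * (d : ℚ) := funext hcast
      rw [this]
      have : ((MM (l := l) B).map (Int.cast : ℤ → ℚ) *ᵥ fun j => v j * (d : ℚ)) i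
          = (d : ℚ) * (((MM (l := l) B).map (Int.cast : ℤ → ℚ)) *ᵥ v) i := by
        simp [Matrix.mulVec, dotProduct, Finset.mul_sum]
        exact Finset.sum_congr rfl fun j _ => by ring
      rw [this, hv]
      simp
    have : ((MM (l := l) B *ᵥ u) i : ℚ) = 0 := by
      rw [← hQi]
      simp [Matrix.mulVec, dotProduct]
    exact_mod_cast this
  have hPuu : Psym B u u = 0 := by
    rw [Psym_expand B]
    have : ∀ i, ∑ j, u i * u j * Psym B (ee i) (ee j) = u i * (MM (l := l) B *ᵥ u) i := by
      intro i
      simp only [Matrix.mulVec, dotProduct, MM, Matrix.of_apply, Finset.mul_sum]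
      exact Finset.sum_congr rfl fun j _ => by ring
    rw [Finset.sum_congr rfl fun i _ => this i, hMu]
    simp
  exact absurd hPuu (Psym_pos B hneg hu0).ne'

lemma coord_bound : ∃ c : ℤ, 0 < c ∧ ∀ (w : Fin l → ℤ) (i : Fin l),
    (w i) ^ 2 ≤ c * Psym B w w := by
  classical
  set A : ℤ := ∑ i, ∑ j, ((MM (l := l) B).adjugate i j) ^ 2 with hA_def
  set T : ℤ := ∑ j, MM (l := l) B j j with hT_def
  have hA0 : 0 ≤ A := Finset.sum_nonneg fun i _ => Finset.sum_nonneg fun j _ => sq_nonneg _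
  have hT0 : 0 ≤ T := Finset.sum_nonneg fun j _ => Psym_nonneg B hneg _
  refine ⟨A * T + 1, by positivity, fun w i => ?_⟩
  have hPww := Psym_nonneg B hneg w
  have hdet2 : 1 ≤ ((MM (l := l) B).det) ^ 2 := by
    have h1 : 1 ≤ |(MM (l := l) B).det| := Int.one_le_abs (by simpa using detMM_ne B hneg)
    calc (1 : ℤ) = 1 ^ 2 := by ring
    _ ≤ |(MM (l := l) B).det| ^ 2 := by exact pow_le_pow_left₀ (by norm_num) h1 2
    _ = ((MM (l := l) B).det) ^ 2 := sq_abs _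
  have hadj : (MM (l := l) B).det * w i = ∑ j, (MM (l := l) B).adjugate i j * Psym B (ee j) w := by
    have h1 : (MM (l := l) B).adjugate *ᵥ (MM (l := l) B *ᵥ w) = (MM (l := l) B).det • w := by
      rw [Matrix.mulVec_mulVec, Matrix.adjugate_mul, Matrix.smul_mulVec, Matrix.one_mulVec]
    have := congrFun h1 i
    simp only [Pi.smul_apply, smul_eq_mul] at this
    rw [← this]
    show ∑ j, (MM (l := l) B).adjugate i j * (MM (l := l) B *ᵥ w) j = _
    exact Finset.sum_congr rfl fun j _ => by rw [mulVec_MM]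
  have hcs : ((MM (l := l) B).det * w i) ^ 2
      ≤ (∑ j, ((MM (l := l) B).adjugate i j) ^ 2) * (∑ j, (Psym B (ee j) w) ^ 2) := by
    rw [hadj]
    exact Finset.sum_mul_sq_le_sq_mul_sq _ _ _
  have hsum : (∑ j, (Psym B (ee j) w) ^ 2) ≤ T * Psym B w w := by
    rw [hT_def, Finset.sum_mul]
    refine Finset.sum_le_sum fun j _ => ?_
    have := Psym_cs B hneg (ee j) w
    have hMjj : MM (l := l) B j j = Psym B (ee j) (ee j) := rfl
    nlinarith [this]
  have hrow : (∑ j, ((MM (l := l) B).adjugate i j) ^ 2) ≤ A := by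
    rw [hA_def]
    exact Finset.single_le_sum (f := fun i => ∑ j, ((MM (l := l) B).adjugate i j) ^ 2)
      (fun i _ => Finset.sum_nonneg fun j _ => sq_nonneg _) (Finset.mem_univ i)
  have hsq : ((MM (l := l) B).det) ^ 2 * (w i) ^ 2 ≤ A * (T * Psym B w w) := by
    have h1 : ((MM (l := l) B).det * w i) ^ 2 = ((MM (l := l) B).det) ^ 2 * (w i) ^ 2 := by ring
    have h2 : (∑ j, ((MM (l := l) B).adjugate i j) ^ 2) * (∑ j, (Psym B (ee j) w) ^ 2)
        ≤ A * (T * Psym B w w) := by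
      have hs0 : 0 ≤ ∑ j, (Psym B (ee j) w) ^ 2 := Finset.sum_nonneg fun j _ => sq_nonneg _
      have hrow0 : 0 ≤ ∑ j, ((MM (l := l) B).adjugate i j) ^ 2 :=
        Finset.sum_nonneg fun j _ => sq_nonneg _
      calc (∑ j, ((MM (l := l) B).adjugate i j) ^ 2) * (∑ j, (Psym B (ee j) w) ^ 2)
          ≤ A * (∑ j, (Psym B (ee j) w) ^ 2) := mul_le_mul_of_nonneg_right hrow hs0
        _ ≤ A * (T * Psym B w w) := mul_le_mul_of_nonneg_left hsum hA0
    linarith [hcs, h1 ▸ hcs]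
  nlinarith [hsq, hdet2, sq_nonneg (w i), hPww]

omit hneg in
lemma sq_le_lin {s α β : ℤ} (hs : 0 ≤ s) (hα : 0 ≤ α) (hβ : 0 ≤ β)
    (h : s ^ 2 ≤ α * s + β) : s ≤ α + β := by
  by_contra hc
  push_neg at hc
  nlinarith

/-- Finiteness of superlevel sets of a coercive (downward) quadratic. -/
lemma FIN (N : ℤ) (hN : 0 < N) (L : (Fin l → ℤ) →ₗ[ℤ] ℤ) (C : ℤ) :
    {ν : Fin l → ℤ | 0 ≤ C + L ν + N * B ν ν}.Finite := by
  classical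
  obtain ⟨c, hc, hcb⟩ := coord_bound B hneg
  set M₀ : ℤ := ∑ i, |L (ee i)| with hM₀_def
  have hM₀0 : 0 ≤ M₀ := Finset.sum_nonneg fun i _ => abs_nonneg _
  have hLbound : ∀ ν : Fin l → ℤ, |L ν| ≤ (∑ i, |ν i|) * M₀ := by
    intro ν
    have h1 : L ν = ∑ i, ν i * L (ee i) := by
      conv_lhs => rw [pi_eq_sum_univ ν]
      rw [map_sum]
      exact Finset.sum_congr rfl fun i _ => by
        rw [_root_.map_smul, smul_eq_mul]; rfl
    rw [h1]
    calc |∑ i, ν i * L (ee i)| ≤ ∑ i, |ν i * L (ee i)| := Finset.abs_sum_le_sum_abs _ _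
      _ ≤ ∑ i, (∑ j, |ν j|) * |L (ee i)| := by
          refine Finset.sum_le_sum fun i _ => ?_
          rw [abs_mul]
          refine mul_le_mul_of_nonneg_right ?_ (abs_nonneg _)
          exact Finset.single_le_sum (f := fun j => |ν j|) (fun j _ => abs_nonneg _) (Finset.mem_univ i)
      _ = (∑ j, |ν j|) * M₀ := by rw [hM₀_def, ← Finset.mul_sum]
  set R : ℤ := 2 * (l:ℤ)^2 * c * M₀ + 2 * (l:ℤ)^2 * c * |C| with hR_def
  have hbox : {ν : Fin l → ℤ | 0 ≤ C + L ν + N * B ν ν} ⊆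
      Set.pi Set.univ (fun _ : Fin l => Set.Icc (-R) R) := by
    intro ν hν
    simp only [Set.mem_setOf_eq] at hν
    have hPexp : Psym B ν ν = -(B ν ν) - B ν ν := rfl
    have hPn := Psym_nonneg B hneg ν
    -- N * Psym ≤ 2C + 2 L ν ≤ 2|C| + 2 s M₀
    set s : ℤ := ∑ i, |ν i| with hs_def
    have hs0 : 0 ≤ s := Finset.sum_nonneg fun i _ => abs_nonneg _
    have hP1 : N * Psym B ν ν ≤ 2 * |C| + 2 * (s * M₀) := by
      have h2 : N * Psym B ν ν = -2 * (N * B ν ν) := by rw [hPexp]; ring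
      have h3 : -(N * B ν ν) ≤ C + L ν := by linarith
      have h4 : L ν ≤ s * M₀ := le_trans (le_abs_self _) (hLbound ν)
      have h5 : C ≤ |C| := le_abs_self _
      linarith
    have hsum_sq : ∑ i, (ν i)^2 ≤ (l:ℤ) * (c * Psym B ν ν) := by
      calc ∑ i, (ν i)^2 ≤ ∑ _i : Fin l, c * Psym B ν ν :=
            Finset.sum_le_sum fun i _ => hcb ν i
        _ = (l:ℤ) * (c * Psym B ν ν) := by simp [mul_comm]
    have hscs : s^2 ≤ (∑ i, (ν i)^2) * (l:ℤ) := by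
      have := Finset.sum_mul_sq_le_sq_mul_sq Finset.univ (fun i => |ν i|) (fun _ => 1)
      simpa [hs_def, sq_abs] using this
    have hs2 : s^2 ≤ (l:ℤ)^2 * (c * Psym B ν ν) := by
      have hl0 : (0:ℤ) ≤ (l:ℤ) := Int.natCast_nonneg l
      nlinarith [hsum_sq, hscs, hPn, hc]
    have hNs2 : s^2 ≤ (2 * (l:ℤ)^2 * c * M₀) * s + 2 * (l:ℤ)^2 * c * |C| := by
      have h6 : N * s^2 ≤ N * ((l:ℤ)^2 * (c * Psym B ν ν)) :=
        mul_le_mul_of_nonneg_left hs2 hN.le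
      have h7 : (l:ℤ)^2 * c * (N * Psym B ν ν) ≤ (l:ℤ)^2 * c *
          (2 * |C| + 2 * (s * M₀)) := by
        refine mul_le_mul_of_nonneg_left hP1 ?_
        positivity
      have h8 : 1 * s^2 ≤ N * s^2 := by
        refine mul_le_mul_of_nonneg_right ?_ (sq_nonneg s); omega
      nlinarith
    have hsR : s ≤ R := by
      rw [hR_def]
      refine sq_le_lin hs0 (by positivity) (by positivity) hNs2
    intro i _
    have h9 : |ν i| ≤ s := Finset.single_le_sum (f := fun j => |ν j|) (fun j _ => abs_nonneg _) (Finset.mem_univ i)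
    have := abs_le.mp (le_trans h9 hsR)
    simpa [Set.mem_Icc] using this
  refine Set.Finite.subset (Set.Finite.pi fun i => Set.finite_Icc _ _) hbox

/-- a coercive (upward) quadratic-plus-linear is bounded below. -/
lemma exists_lb (N : ℤ) (hN : 0 < N) (L : (Fin l → ℤ) →ₗ[ℤ] ℤ) :
    ∃ m : ℤ, ∀ w : Fin l → ℤ, m ≤ L w - N * B w w := by
  classical
  have hfin : {w : Fin l → ℤ | 0 ≤ (0:ℤ) + (-L) w + N * B w w}.Finite :=
    FIN B hneg N hN (-L) 0
  have h0mem : (0 : Fin l → ℤ) ∈ hfin.toFinset := by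
    rw [Set.Finite.mem_toFinset]
    simp
  have hne : (hfin.toFinset.image fun w => L w - N * B w w).Nonempty :=
    ⟨_, Finset.mem_image_of_mem _ h0mem⟩
  set m := (hfin.toFinset.image fun w => L w - N * B w w).min' hne with hm_def
  refine ⟨min m 0, fun w => ?_⟩
  by_cases hw : w ∈ {w : Fin l → ℤ | 0 ≤ (0:ℤ) + (-L) w + N * B w w}
  · have : m ≤ L w - N * B w w :=
      Finset.min'_le _ _ (Finset.mem_image_of_mem _ (hfin.mem_toFinset.mpr hw))
    exact le_trans (min_le_left _ _) this
  · simp only [Set.mem_setOf_eq, not_le, LinearMap.neg_apply] at hw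
    have : (0:ℤ) ≤ L w - N * B w w := by linarith
    exact le_trans (min_le_right _ _) this


end Quadratic

section Group
variable (B : (Fin l → ℤ) →ₗ[ℤ] (Fin l → ℤ) →ₗ[ℤ] ℤ)

/-- normal form of an element of the double coset Γ₀ (a,lam,mu,k) Γ₀ -/
def Pform (a : ℤ) (lam mu : Fin l → ℤ) (k : ℤ) (ν₁ ν₂ : Fin l → ℤ) :
    ℤ × (Fin l → ℤ) × (Fin l → ℤ) × ℤ :=
  (a + B ν₁ mu - B mu ν₂ + k * B (ν₁ + lam) ν₂, lam + ν₁ + ν₂, mu + k • ν₂, k)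

lemma LxR (a : ℤ) (lam mu : Fin l → ℤ) (k : ℤ) (ν₁ ν₂ : Fin l → ℤ) :
    gtMul (fun u v => B u v)
      (gtMul (fun u v => B u v) ((0:ℤ), ν₁, (0 : Fin l → ℤ), (0:ℤ)) (a, lam, mu, k))
      ((0:ℤ), ν₂, (0 : Fin l → ℤ), (0:ℤ)) = Pform B a lam mu k ν₁ ν₂ := by
  simp only [gtMul, Pform, Prod.mk.injEq]
  refine ⟨?_, ?_, ?_, ?_⟩
  · simp only [map_zero, LinearMap.zero_apply, _root_.map_smul, map_add, LinearMap.add_apply,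
      LinearMap.smul_apply, smul_eq_mul, zero_smul, add_zero, zero_add, zero_mul]
    ring
  · abel
  · module
  · ring

lemma mem_dcoset_iff (a : ℤ) (lam mu : Fin l → ℤ) (k : ℤ)
    (p : ℤ × (Fin l → ℤ) × (Fin l → ℤ) × ℤ) :
    p ∈ dcoset (fun u v => B u v) (a, lam, mu, k) ↔
      ∃ ν₁ ν₂ : Fin l → ℤ, p = Pform B a lam mu k ν₁ ν₂ := by
  simp only [dcoset, Set.mem_setOf_eq, LxR]

lemma cMul (n f₁ : ℤ) (f₂ f₃ : Fin l → ℤ) (f₄ : ℤ) :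
    gtMul (fun u v => B u v) (n, (0 : Fin l → ℤ), (0 : Fin l → ℤ), (0:ℤ)) (f₁, f₂, f₃, f₄)
      = (n + f₁, f₂, f₃, f₄) := by
  simp only [gtMul, Prod.mk.injEq]
  refine ⟨?_, by abel, by module, by ring⟩
  simp only [map_zero, LinearMap.zero_apply, zero_mul, add_zero, sub_zero]

lemma PxR (a : ℤ) (lam mu : Fin l → ℤ) (k : ℤ) (ν₁ ν₂ w : Fin l → ℤ) :
    gtMul (fun u v => B u v) (Pform B a lam mu k ν₁ ν₂) ((0:ℤ), w, (0 : Fin l → ℤ), (0:ℤ))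
      = Pform B a lam mu k ν₁ (ν₂ + w) := by
  simp only [gtMul, Pform, Prod.mk.injEq]
  refine ⟨?_, ?_, ?_, ?_⟩
  · simp only [map_zero, LinearMap.zero_apply, _root_.map_smul, map_add, LinearMap.add_apply,
      LinearMap.smul_apply, smul_eq_mul, zero_smul, add_zero, zero_add, zero_mul]
    ring
  · abel
  · module
  · ring

lemma LxP (a : ℤ) (lam mu : Fin l → ℤ) (k : ℤ) (ν₁ ν₂ w : Fin l → ℤ) :
    gtMul (fun u v => B u v) ((0:ℤ), w, (0 : Fin l → ℤ), (0:ℤ)) (Pform B a lam mu k ν₁ ν₂)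
      = Pform B a lam mu k (w + ν₁) ν₂ := by
  simp only [gtMul, Pform, Prod.mk.injEq]
  refine ⟨?_, ?_, ?_, ?_⟩
  · simp only [map_zero, LinearMap.zero_apply, _root_.map_smul, map_add, LinearMap.add_apply,
      LinearMap.smul_apply, smul_eq_mul, zero_smul, add_zero, zero_add, zero_mul]
    ring
  · abel
  · module
  · ring

end Group

end Stmt13Aux

/-- For a `ℤ`-bilinear form `B` on `ℤ^l` with negative definite symmetrization, `Γ̃⁺` is a
sub-semigroup of `Γ̃` containing `Γ̃₀`, and the pair `(Γ̃⁺, Γ̃₀)` is almost good: for all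
`x, y ∈ Γ̃⁺`, (1') there is a finite set `F ⊆ Γ̃⁺` such that every product `p·q` with
`p ∈ Γ̃₀xΓ̃₀`, `q ∈ Γ̃₀yΓ̃₀` lies in `Γ̃₀·cⁿ·f·Γ̃₀` for some `n ≥ 0` and `f ∈ F`
(where `c = (1,0,0,0)`, so `cⁿ·f = (n,0,0,0)·f`), and (2) all fibers of the multiplication
map are finite. -/
theorem stmt13 {l : ℕ} (B : (Fin l → ℤ) →ₗ[ℤ] (Fin l → ℤ) →ₗ[ℤ] ℤ)
    (hneg : ∀ ν : Fin l → ℤ, ν ≠ 0 → B ν ν + B ν ν < 0) :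
    (∀ g h : ℤ × (Fin l → ℤ) × (Fin l → ℤ) × ℤ,
      isPlus g → isPlus h → isPlus (gtMul (fun x y => B x y) g h)) ∧
    (∀ g : ℤ × (Fin l → ℤ) × (Fin l → ℤ) × ℤ, isGamma0 g → isPlus g) ∧
    ∀ x y : ℤ × (Fin l → ℤ) × (Fin l → ℤ) × ℤ, isPlus x → isPlus y →
      (∃ F : Finset (ℤ × (Fin l → ℤ) × (Fin l → ℤ) × ℤ),
        (∀ f ∈ F, isPlus f) ∧
        ∀ p q : ℤ × (Fin l → ℤ) × (Fin l → ℤ) × ℤ,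
          p ∈ dcoset (fun x y => B x y) x → q ∈ dcoset (fun x y => B x y) y →
          ∃ n : ℕ, ∃ f ∈ F,
            gtMul (fun x y => B x y) p q ∈
              dcoset (fun x y => B x y)
                (gtMul (fun x y => B x y)
                  ((n : ℤ), (0 : Fin l → ℤ), (0 : Fin l → ℤ), (0 : ℤ)) f)) ∧
      ∀ z : ℤ × (Fin l → ℤ) × (Fin l → ℤ) × ℤ,
        Finite (Quot (gtFiberRel (fun x y => B x y)
          (dcoset (fun x y => B x y) x) (dcoset (fun x y => B x y) y) z)) := by
  classical
  have hx'of : ∀ a : ℤ, ∀ lam mu : Fin l → ℤ, ∀ k : ℤ,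
      isPlus (a, lam, mu, k) → (mu = 0 ∧ k = 0) ∨ 0 < k := by
    rintro a lam mu k (⟨a0, lam0, h⟩ | h)
    · simp only [Prod.mk.injEq] at h
      exact Or.inl ⟨h.2.2.1, h.2.2.2⟩
    · exact Or.inr h
  refine ⟨?_, ?_, ?_⟩
  · -- semigroup closure
    rintro ⟨a₁, l₁, m₁, k₁⟩ ⟨a₂, l₂, m₂, k₂⟩ hg hh
    rcases hx'of _ _ _ _ hg with ⟨hm1, hk1⟩ | hk1
    · rcases hx'of _ _ _ _ hh with ⟨hm2, hk2⟩ | hk2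
      · subst hm1 hk1 hm2 hk2
        refine Or.inl ⟨a₁ + a₂ + B l₁ 0 - B 0 l₂ + 0 * B l₁ l₂, l₁ + l₂, ?_⟩
        simp only [gtMul]
        exact Stmt13Aux.mk4_eq (by ring) (by module) (by module) (by ring)
      · exact Or.inr (show (0:ℤ) < k₁ + k₂ by omega)
    · have hk2 : 0 ≤ k₂ := by
        rcases hx'of _ _ _ _ hh with ⟨_, hk2⟩ | hk2 <;> omega
      exact Or.inr (show (0:ℤ) < k₁ + k₂ by omega)
  · -- Γ₀ ⊆ Γ⁺
    rintro g ⟨ν, rfl⟩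
    exact Or.inl ⟨0, ν, rfl⟩
  · intro x y hx hy
    obtain ⟨a, lam, mu, k⟩ := x
    obtain ⟨a', lam', mu', k'⟩ := y
    have hx' := hx'of _ _ _ _ hx
    have hy' := hx'of _ _ _ _ hy
    constructor
    · -- (1')
      rcases hx' with ⟨hmu, hk⟩ | hk
      · rcases hy' with ⟨hmu', hk'⟩ | hk'
        · -- Case A : k = 0, k' = 0
          subst hmu hk hmu' hk'
          refine ⟨{(a + a', 0, 0, 0)}, ?_, ?_⟩
          · intro f hf
            rw [Finset.mem_singleton] at hf
            subst hf
            exact Or.inl ⟨a + a', 0, rfl⟩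
          · intro p q hp hq
            rw [Stmt13Aux.mem_dcoset_iff] at hp hq
            obtain ⟨ν₁, ν₂, rfl⟩ := hp
            obtain ⟨ν₃, ν₄, rfl⟩ := hq
            refine ⟨0, _, Finset.mem_singleton_self _, ?_⟩
            rw [Stmt13Aux.cMul, Stmt13Aux.mem_dcoset_iff]
            refine ⟨lam + ν₁ + ν₂ + lam' + ν₃ + ν₄, 0, ?_⟩
            simp only [Stmt13Aux.Pform, gtMul]
            refine Stmt13Aux.mk4_eq ?_ (by module) (by module) (by ring)
            first
              | (simp only [map_zero, LinearMap.zero_apply, _root_.map_smul, map_add, map_sub,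
                  LinearMap.add_apply, LinearMap.sub_apply, LinearMap.smul_apply, smul_eq_mul,
                  zero_smul, add_zero, zero_add, zero_mul, mul_zero, sub_zero, Nat.cast_zero]
                 ring)
              | simp only [map_zero, LinearMap.zero_apply, _root_.map_smul, map_add, map_sub,
                  LinearMap.add_apply, LinearMap.sub_apply, LinearMap.smul_apply, smul_eq_mul,
                  zero_smul, add_zero, zero_add, zero_mul, mul_zero, sub_zero, Nat.cast_zero]
              | ring
        · -- Case B : k = 0, 0 < k'
          subst hmu hk
          refine ⟨{(a + a' - B lam' mu', 0, mu', k')}, ?_, ?_⟩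
          · intro f hf
            rw [Finset.mem_singleton] at hf
            subst hf
            exact Or.inr hk'
          · intro p q hp hq
            rw [Stmt13Aux.mem_dcoset_iff] at hp hq
            obtain ⟨ν₁, ν₂, rfl⟩ := hp
            obtain ⟨ν₃, ν₄, rfl⟩ := hq
            refine ⟨0, _, Finset.mem_singleton_self _, ?_⟩
            rw [Stmt13Aux.cMul, Stmt13Aux.mem_dcoset_iff]
            refine ⟨lam + ν₁ + ν₂ + lam' + ν₃, ν₄, ?_⟩
            simp only [Stmt13Aux.Pform, gtMul]
            refine Stmt13Aux.mk4_eq ?_ (by module) (by module) (by ring)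
            first
              | (simp only [map_zero, LinearMap.zero_apply, _root_.map_smul, map_add, map_sub,
                  LinearMap.add_apply, LinearMap.sub_apply, LinearMap.smul_apply, smul_eq_mul,
                  zero_smul, add_zero, zero_add, zero_mul, mul_zero, sub_zero, Nat.cast_zero]
                 ring)
              | simp only [map_zero, LinearMap.zero_apply, _root_.map_smul, map_add, map_sub,
                  LinearMap.add_apply, LinearMap.sub_apply, LinearMap.smul_apply, smul_eq_mul,
                  zero_smul, add_zero, zero_add, zero_mul, mul_zero, sub_zero, Nat.cast_zero]
              | ring
      · rcases hy' with ⟨hmu', hk'⟩ | hk'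
        · -- Case C : 0 < k, k' = 0
          subst hmu' hk'
          refine ⟨{(a + a' - B lam mu, 0, mu, k)}, ?_, ?_⟩
          · intro f hf
            rw [Finset.mem_singleton] at hf
            subst hf
            exact Or.inr hk
          · intro p q hp hq
            rw [Stmt13Aux.mem_dcoset_iff] at hp hq
            obtain ⟨ν₁, ν₂, rfl⟩ := hp
            obtain ⟨ν₃, ν₄, rfl⟩ := hq
            refine ⟨0, _, Finset.mem_singleton_self _, ?_⟩
            rw [Stmt13Aux.cMul, Stmt13Aux.mem_dcoset_iff]
            refine ⟨lam + ν₁, ν₂ + lam' + ν₃ + ν₄, ?_⟩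
            simp only [Stmt13Aux.Pform, gtMul]
            refine Stmt13Aux.mk4_eq ?_ (by module) (by module) (by ring)
            first
              | (simp only [map_zero, LinearMap.zero_apply, _root_.map_smul, map_add, map_sub,
                  LinearMap.add_apply, LinearMap.sub_apply, LinearMap.smul_apply, smul_eq_mul,
                  zero_smul, add_zero, zero_add, zero_mul, mul_zero, sub_zero, Nat.cast_zero]
                 ring)
              | simp only [map_zero, LinearMap.zero_apply, _root_.map_smul, map_add, map_sub,
                  LinearMap.add_apply, LinearMap.sub_apply, LinearMap.smul_apply, smul_eq_mul,
                  zero_smul, add_zero, zero_add, zero_mul, mul_zero, sub_zero, Nat.cast_zero]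
              | ring
        · -- Case D : 0 < k, 0 < k'
          have hK : (0:ℤ) < k + k' := by linarith
          have hN : (0:ℤ) < (k + k') * k * k' := by positivity
          set Lr : (Fin l → ℤ) → (Fin l → ℤ) →ₗ[ℤ] ℤ := fun r =>
            (-(k * k')) • (B lam' + B.flip lam' + B r + B.flip r)
              + (-k') • (B mu + B.flip mu) + k • (B mu' + B.flip mu') with hLr_def
          have hm : ∀ r : Fin l → ℤ, ∃ m : ℤ, ∀ w : Fin l → ℤ,
              m ≤ Lr r w - ((k + k') * k * k') * B w w := fun r =>
            Stmt13Aux.exists_lb B hneg ((k + k') * k * k') hN (Lr r)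
          set m : (Fin l → ℤ) → ℤ := fun r => (hm r).choose with hm_def
          have hmspec : ∀ r w : Fin l → ℤ, m r ≤ Lr r w - ((k + k') * k * k') * B w w :=
            fun r => (hm r).choose_spec
          set c₀ : (Fin l → ℤ) → ℤ := fun r => a + a' - B lam mu - B lam' mu - B mu lam'
            - B lam' mu' - k * B lam' lam' - k * B lam' r - B mu r - B r mu - k * B r lam'
            - k * B r r with hc₀_def
          refine ⟨(Fintype.piFinset fun _ : Fin l => Finset.Icc (0:ℤ) (k + k' - 1)).image
            (fun r => (c₀ r + m r, 0, mu + mu' + k • lam' + k • r, k + k')), ?_, ?_⟩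
          · intro f hf
            rw [Finset.mem_image] at hf
            obtain ⟨r, _, rfl⟩ := hf
            exact Or.inr hK
          · intro p q hp hq
            rw [Stmt13Aux.mem_dcoset_iff] at hp hq
            obtain ⟨ν₁, ν₂, rfl⟩ := hp
            obtain ⟨ν₃, ν₄, rfl⟩ := hq
            obtain ⟨r, w, hrmem, hsplit⟩ : ∃ r w : Fin l → ℤ,
                (r ∈ Fintype.piFinset fun _ : Fin l => Finset.Icc (0:ℤ) (k + k' - 1))
                  ∧ ν₂ + ν₃ = r + (k + k') • w := by
              refine ⟨fun i => (ν₂ i + ν₃ i) % (k + k'),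
                fun i => (ν₂ i + ν₃ i) / (k + k'), ?_, ?_⟩
              · rw [Fintype.mem_piFinset]
                intro i
                rw [Finset.mem_Icc]
                refine ⟨Int.emod_nonneg _ hK.ne', ?_⟩
                have := Int.emod_lt_of_pos (ν₂ i + ν₃ i) hK
                omega
              · funext i
                simp only [Pi.add_apply, Pi.smul_apply, smul_eq_mul]
                exact (Int.emod_add_mul_ediv (ν₂ i + ν₃ i) (k + k')).symm
            have hν₃ : ν₃ = r + (k + k') • w - ν₂ := by rw [← hsplit]; abel
            subst hν₃
            have hn0 : (0:ℤ) ≤ (Lr r w - ((k + k') * k * k') * B w w) - m r := by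
              have := hmspec r w; linarith
            refine ⟨((Lr r w - ((k + k') * k * k') * B w w) - m r).toNat, _,
              Finset.mem_image_of_mem _ hrmem, ?_⟩
            rw [Stmt13Aux.cMul, Stmt13Aux.mem_dcoset_iff]
            refine ⟨lam + lam' + ν₁ + r + k' • w, ν₄ + k • w, ?_⟩
            have hcast : (((Lr r w - ((k + k') * k * k') * B w w) - m r).toNat : ℤ)
                = Lr r w - ((k + k') * k * k') * B w w - m r := Int.toNat_of_nonneg hn0
            simp only [Stmt13Aux.Pform, gtMul]
            refine Stmt13Aux.mk4_eq ?_ (by module) (by module) (by ring)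
            rw [hcast]
            simp only [hLr_def, hc₀_def, LinearMap.add_apply, LinearMap.smul_apply,
              LinearMap.flip_apply, map_zero, LinearMap.zero_apply, _root_.map_smul, map_add,
              map_sub, LinearMap.sub_apply, smul_eq_mul, zero_smul, add_zero, zero_add,
              zero_mul, mul_zero, sub_zero]
            ring
    · -- (2)
      intro z
      obtain ⟨z₁, z₂, z₃, z₄⟩ := z
      rcases hx' with ⟨hmu, hk⟩ | hk
      · -- k = 0, mu = 0 : Quot is a subsingleton
        subst hmu hk
        rcases hy' with ⟨hmu', hk'⟩ | hk'
        · -- k' = 0 too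
          subst hmu' hk'
          refine @Finite.of_subsingleton _ ⟨fun u u' => ?_⟩
          induction u using Quot.ind with | _ t => ?_
          induction u' using Quot.ind with | _ t' => ?_
          apply Quot.sound
          obtain ⟨⟨p, q⟩, hp, hq, hz⟩ := t
          obtain ⟨⟨p', q'⟩, hp', hq', hz'⟩ := t'
          rw [Stmt13Aux.mem_dcoset_iff] at hp hq hp' hq'
          obtain ⟨ν₁, ν₂, rfl⟩ := hp
          obtain ⟨ν₃, ν₄, rfl⟩ := hq
          obtain ⟨ν₁', ν₂', rfl⟩ := hp'
          obtain ⟨ν₃', ν₄', rfl⟩ := hq'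
          simp only [Stmt13Aux.Pform, gtMul, Prod.mk.injEq] at hz hz'
          obtain ⟨hz1, hz2, hz3, hz4⟩ := hz
          obtain ⟨hz1', hz2', hz3', hz4'⟩ := hz'
          refine ⟨ν₁ + ν₂ - (ν₁' + ν₂'), ?_, ?_⟩
          · rw [Stmt13Aux.PxR]
            refine Stmt13Aux.mk4_eq ?_ ?_ (by module) (by ring)
            · simp only [map_zero, LinearMap.zero_apply, zero_mul, mul_zero, add_zero, sub_zero]
            · module
          · rw [Stmt13Aux.LxP]
            refine Stmt13Aux.mk4_eq ?_ ?_ (by module) (by ring)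
            · simp only [map_zero, LinearMap.zero_apply, zero_mul, mul_zero, add_zero, sub_zero]
            · funext i
              have h1 := congrFun hz2 i
              have h2 := congrFun hz2' i
              simp only [Pi.add_apply, Pi.sub_apply, Pi.neg_apply] at h1 h2 ⊢
              linarith
        · -- k = 0, 0 < k'
          refine @Finite.of_subsingleton _ ⟨fun u u' => ?_⟩
          induction u using Quot.ind with | _ t => ?_
          induction u' using Quot.ind with | _ t' => ?_
          apply Quot.sound
          obtain ⟨⟨p, q⟩, hp, hq, hz⟩ := t
          obtain ⟨⟨p', q'⟩, hp', hq', hz'⟩ := t'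
          rw [Stmt13Aux.mem_dcoset_iff] at hp hq hp' hq'
          obtain ⟨ν₁, ν₂, rfl⟩ := hp
          obtain ⟨ν₃, ν₄, rfl⟩ := hq
          obtain ⟨ν₁', ν₂', rfl⟩ := hp'
          obtain ⟨ν₃', ν₄', rfl⟩ := hq'
          simp only [Stmt13Aux.Pform, gtMul, Prod.mk.injEq] at hz hz'
          obtain ⟨hz1, hz2, hz3, hz4⟩ := hz
          obtain ⟨hz1', hz2', hz3', hz4'⟩ := hz'
          have hν₄ : ν₄' = ν₄ := by
            funext i
            have h1 := congrFun hz3 i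
            have h2 := congrFun hz3' i
            simp only [Pi.add_apply, Pi.smul_apply, Pi.zero_apply, smul_eq_mul,
              zero_mul, mul_zero, add_zero, zero_add] at h1 h2
            have h3 : k' * ν₄ i = k' * ν₄' i := by linarith
            exact (mul_left_cancel₀ (ne_of_gt hk') h3).symm
          have hν₃ : ν₃' = ν₁ + ν₂ - (ν₁' + ν₂') + ν₃ := by
            funext i
            have h1 := congrFun hz2 i
            have h2 := congrFun hz2' i
            have h5 := congrFun hν₄ i
            simp only [Pi.add_apply, Pi.sub_apply] at h1 h2 h5 ⊢
            linarith
          refine ⟨ν₁ + ν₂ - (ν₁' + ν₂'), ?_, ?_⟩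
          · rw [Stmt13Aux.PxR]
            refine Stmt13Aux.mk4_eq ?_ ?_ (by module) (by ring)
            · simp only [map_zero, LinearMap.zero_apply, zero_mul, mul_zero, add_zero, sub_zero]
            · module
          · show Stmt13Aux.Pform B a' lam' mu' k' ν₃' ν₄' = _
            rw [Stmt13Aux.LxP, hν₄, hν₃]
      · rcases hy' with ⟨hmu', hk'⟩ | hk'
        · -- 0 < k, k' = 0
          subst hmu' hk'
          refine @Finite.of_subsingleton _ ⟨fun u u' => ?_⟩
          induction u using Quot.ind with | _ t => ?_
          induction u' using Quot.ind with | _ t' => ?_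
          apply Quot.sound
          obtain ⟨⟨p, q⟩, hp, hq, hz⟩ := t
          obtain ⟨⟨p', q'⟩, hp', hq', hz'⟩ := t'
          rw [Stmt13Aux.mem_dcoset_iff] at hp hq hp' hq'
          obtain ⟨ν₁, ν₂, rfl⟩ := hp
          obtain ⟨ν₃, ν₄, rfl⟩ := hq
          obtain ⟨ν₁', ν₂', rfl⟩ := hp'
          obtain ⟨ν₃', ν₄', rfl⟩ := hq'
          simp only [Stmt13Aux.Pform, gtMul, Prod.mk.injEq] at hz hz'
          obtain ⟨hz1, hz2, hz3, hz4⟩ := hz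
          obtain ⟨hz1', hz2', hz3', hz4'⟩ := hz'
          have hν₂ : ν₂' = ν₂ - (ν₃' + ν₄' - (ν₃ + ν₄)) := by
            funext i
            have h1 := congrFun hz3 i
            have h2 := congrFun hz3' i
            simp only [Pi.add_apply, Pi.sub_apply, Pi.smul_apply, Pi.zero_apply, smul_eq_mul,
              zero_mul, mul_zero, add_zero, zero_add] at h1 h2 ⊢
            have h3 : k * (ν₂ i - (ν₃' i + ν₄' i - (ν₃ i + ν₄ i))) = k * ν₂' i := by
              linear_combination h1 - h2
            exact (mul_left_cancel₀ (ne_of_gt hk) h3).symm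
          have hν₁ : ν₁' = ν₁ := by
            funext i
            have h1 := congrFun hz2 i
            have h2 := congrFun hz2' i
            have h5 := congrFun hν₂ i
            simp only [Pi.add_apply, Pi.sub_apply] at h1 h2 h5 ⊢
            linarith
          refine ⟨ν₃' + ν₄' - (ν₃ + ν₄), ?_, ?_⟩
          · show Stmt13Aux.Pform B a lam mu k ν₁' ν₂' = _
            rw [Stmt13Aux.PxR, hν₁, hν₂]
            refine Stmt13Aux.mk4_eq ?_ (by module) (by module) (by ring)
            simp only [map_zero, LinearMap.zero_apply, _root_.map_smul, map_add, map_sub,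
              LinearMap.add_apply, LinearMap.sub_apply, LinearMap.smul_apply, map_neg,
              LinearMap.neg_apply, smul_eq_mul]
            ring
          · show Stmt13Aux.Pform B a' lam' 0 0 ν₃' ν₄' = _
            rw [Stmt13Aux.LxP]
            refine Stmt13Aux.mk4_eq ?_ (by module) (by module) (by ring)
            simp only [map_zero, LinearMap.zero_apply, zero_mul, mul_zero, add_zero, sub_zero]
        · -- 0 < k, 0 < k' : genuine finiteness
          have hK : (0:ℤ) < k + k' := by linarith
          have hN : (0:ℤ) < (k + k') * k * k' := by positivity
          set vt : Fin l → ℤ := z₂ - lam - lam' with hvt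
          set wt : Fin l → ℤ := z₃ - mu - mu' - k • lam' with hwt
          set L₀ : (Fin l → ℤ) →ₗ[ℤ] ℤ :=
            (-(k + k')) • ((-k') • (B.flip mu) + k • (B.flip mu') + (-(k * k')) • (B.flip lam')
              + (-k') • (B mu) + k • (B mu') + (-(k * k')) • (B lam')) with hL₀
          set C₀ : ℤ := (k + k')^2 * (z₁ - a - a')
            - ((k + k')^2 * (k * B lam lam' + B lam mu' + B lam wt - B mu lam'
                + k * B vt lam' + B vt mu + B vt mu' + B vt wt)
              + (k + k') * (k' * B lam' wt - B mu wt - B mu' wt - k * B wt lam'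
                - B wt mu - B wt mu' - B wt wt)) with hC₀
          have hfin : {ν : Fin l → ℤ | 0 ≤ C₀ + L₀ ν + ((k + k') * k * k') * B ν ν}.Finite :=
            Stmt13Aux.FIN B hneg _ hN L₀ C₀
          haveI := hfin.to_subtype
          have hφval : ∀ (p q : ℤ × (Fin l → ℤ) × (Fin l → ℤ) × ℤ)
              (ν₁ ν₂ ν₃ ν₄ : Fin l → ℤ),
              p = Stmt13Aux.Pform B a lam mu k ν₁ ν₂ →
              q = Stmt13Aux.Pform B a' lam' mu' k' ν₃ ν₄ →
              ((fun i => (p.2.2.1 i - mu i) / k) + (q.2.1 - lam'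
                - fun i => (q.2.2.1 i - mu' i) / k')) = ν₂ + ν₃ := by
            intro p q ν₁ ν₂ ν₃ ν₄ hp hq
            subst hp hq
            funext i
            simp only [Stmt13Aux.Pform, Pi.add_apply, Pi.sub_apply, Pi.smul_apply, smul_eq_mul]
            have e1 : mu i + k * ν₂ i - mu i = k * ν₂ i := by ring
            have e2 : mu' i + k' * ν₄ i - mu' i = k' * ν₄ i := by ring
            rw [e1, e2, Int.mul_ediv_cancel_left _ (ne_of_gt hk),
              Int.mul_ediv_cancel_left _ (ne_of_gt hk')]
            ring
          have hmem : ∀ (ν₁ ν₂ ν₃ ν₄ : Fin l → ℤ),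
              gtMul (fun x y => B x y) (Stmt13Aux.Pform B a lam mu k ν₁ ν₂)
                (Stmt13Aux.Pform B a' lam' mu' k' ν₃ ν₄) = (z₁, z₂, z₃, z₄) →
              0 ≤ C₀ + L₀ (ν₂ + ν₃) + ((k + k') * k * k') * B (ν₂ + ν₃) (ν₂ + ν₃) := by
            intro ν₁ ν₂ ν₃ ν₄ hz
            simp only [Stmt13Aux.Pform, gtMul, Prod.mk.injEq] at hz
            obtain ⟨hz1, hz2, hz3, hz4⟩ := hz
            simp only [hC₀, hvt, hwt, hL₀]
            rw [← hz1, ← hz2, ← hz3]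
            refine le_of_eq (Eq.symm ?_)
            simp only [map_zero, LinearMap.zero_apply, _root_.map_smul, map_add, map_sub,
              LinearMap.add_apply, LinearMap.sub_apply, LinearMap.smul_apply,
              LinearMap.flip_apply, LinearMap.neg_apply, smul_eq_mul]
            ring
          set Φ : {pq : (ℤ × (Fin l → ℤ) × (Fin l → ℤ) × ℤ) × (ℤ × (Fin l → ℤ) × (Fin l → ℤ) × ℤ) //
              pq.1 ∈ dcoset (fun x y => B x y) (a, lam, mu, k)
              ∧ pq.2 ∈ dcoset (fun x y => B x y) (a', lam', mu', k')
              ∧ gtMul (fun x y => B x y) pq.1 pq.2 = (z₁, z₂, z₃, z₄)} →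
              {ν : Fin l → ℤ | 0 ≤ C₀ + L₀ ν + ((k + k') * k * k') * B ν ν} := fun t =>
            ⟨(fun i => (t.1.1.2.2.1 i - mu i) / k) + (t.1.2.2.1 - lam'
                - fun i => (t.1.2.2.2.1 i - mu' i) / k'), by
              obtain ⟨⟨p, q⟩, hp, hq, hz⟩ := t
              rw [Stmt13Aux.mem_dcoset_iff] at hp hq
              obtain ⟨ν₁, ν₂, rfl⟩ := hp
              obtain ⟨ν₃, ν₄, rfl⟩ := hq
              rw [Set.mem_setOf_eq, hφval _ _ ν₁ ν₂ ν₃ ν₄ rfl rfl]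
              exact hmem ν₁ ν₂ ν₃ ν₄ hz⟩ with hΦ
          have hresp : ∀ t t', gtFiberRel (fun x y => B x y)
              (dcoset (fun x y => B x y) (a, lam, mu, k))
              (dcoset (fun x y => B x y) (a', lam', mu', k')) (z₁, z₂, z₃, z₄) t t' →
              Φ t = Φ t' := by
            intro t t' hrel
            obtain ⟨ν, hrp, hrq⟩ := hrel
            obtain ⟨⟨p, q⟩, hp, hq, hz⟩ := t
            obtain ⟨⟨p', q'⟩, hp', hq', hz'⟩ := t'
            rw [Stmt13Aux.mem_dcoset_iff] at hp hq
            obtain ⟨ν₁, ν₂, rfl⟩ := hp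
            obtain ⟨ν₃, ν₄, rfl⟩ := hq
            simp only at hrp hrq
            rw [Stmt13Aux.PxR] at hrp
            rw [Stmt13Aux.LxP] at hrq
            apply Subtype.ext
            refine Eq.trans (hφval _ _ ν₁ ν₂ ν₃ ν₄ rfl rfl) ?_
            refine Eq.trans ?_ (hφval _ _ ν₁ (ν₂ + -ν) (ν + ν₃) ν₄ hrp hrq).symm
            abel
          haveI : Finite {ν : Fin l → ℤ | 0 ≤ C₀ + L₀ ν + ((k + k') * k * k') * B ν ν} :=
            hfin.to_subtype
          refine Finite.of_injective (Quot.lift Φ hresp) ?_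
          intro u u'
          induction u using Quot.ind with | _ t => ?_
          induction u' using Quot.ind with | _ t' => ?_
          intro he
          apply Quot.sound
          obtain ⟨⟨p, q⟩, hp, hq, hz⟩ := t
          obtain ⟨⟨p', q'⟩, hp', hq', hz'⟩ := t'
          rw [Stmt13Aux.mem_dcoset_iff] at hp hq hp' hq'
          obtain ⟨ν₁, ν₂, rfl⟩ := hp
          obtain ⟨ν₃, ν₄, rfl⟩ := hq
          obtain ⟨ν₁', ν₂', rfl⟩ := hp'
          obtain ⟨ν₃', ν₄', rfl⟩ := hq'
          have hee : ν₂ + ν₃ = ν₂' + ν₃' := by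
            rw [← hφval _ _ ν₁ ν₂ ν₃ ν₄ rfl rfl, ← hφval _ _ ν₁' ν₂' ν₃' ν₄' rfl rfl]
            exact congrArg Subtype.val he
          simp only [Stmt13Aux.Pform, gtMul, Prod.mk.injEq] at hz hz'
          obtain ⟨hz1, hz2, hz3, hz4⟩ := hz
          obtain ⟨hz1', hz2', hz3', hz4'⟩ := hz'
          have hν₄ : ν₄' = ν₄ := by
            funext i
            have h1 := congrFun hz3 i
            have h2 := congrFun hz3' i
            have h3 := congrFun hee i
            simp only [Pi.add_apply, Pi.smul_apply, smul_eq_mul] at h1 h2 h3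
            have h4 : (k + k') * ν₄' i = (k + k') * ν₄ i := by
              linear_combination h2 - h1 + k * h3
            exact mul_left_cancel₀ (ne_of_gt hK) h4
          have hν₁ : ν₁' = ν₁ := by
            funext i
            have h1 := congrFun hz2 i
            have h2 := congrFun hz2' i
            have h3 := congrFun hee i
            have h5 := congrFun hν₄ i
            simp only [Pi.add_apply] at h1 h2 h3 h5 ⊢
            linarith
          have hν₃ : ν₃' = ν₂ - ν₂' + ν₃ := by
            funext i
            have h3 := congrFun hee i
            simp only [Pi.add_apply, Pi.sub_apply] at h3 ⊢
            linarith
          refine ⟨ν₂ - ν₂', ?_, ?_⟩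
          · show Stmt13Aux.Pform B a lam mu k ν₁' ν₂' = _
            rw [Stmt13Aux.PxR, hν₁]
            have hrw : ν₂ + -(ν₂ - ν₂') = ν₂' := by abel
            rw [hrw]
          · show Stmt13Aux.Pform B a' lam' mu' k' ν₃' ν₄' = _
            rw [Stmt13Aux.LxP, hν₄, hν₃]
end

section
/- Let b : ℤ^l × ℤ^l → ℤ be a ℤ-bilinear form and Q(λ,μ) = b(λ,μ) + b(μ,λ). For ν ∈ ℤ^l define the map φ_ν : ℂˣ × (ℂˣ)^l × ℂˣ → ℂˣ × (ℂˣ)^l × ℂˣ by φ_ν(t, x, v) = ( t · (∏_{i=1}^{l} x_i^{ν_i}) · v^{b(ν,ν)}, ( v^{Q(ν,e_i)} · x_i )_{i=1,…,l}, v ), where e_1,…,e_l is the standard basis of ℤ^l. Then φ_0 is the identity and φ_ν ∘ φ_{ν'} = φ_{ν+ν'} for all ν, ν' ∈ ℤ^l; i.e. these formulas define an action of the additive group ℤ^l on the torus ℂˣ × (ℂˣ)^l × ℂˣ. -/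
private lemma zpow_fsum {ι : Type*} (v : ℂˣ) (s : Finset ι) (f : ι → ℤ) :
    v ^ (∑ i ∈ s, f i) = ∏ i ∈ s, v ^ f i := by
  classical
  induction s using Finset.induction with
  | empty => simp
  | @insert a s h ih => simp [Finset.sum_insert h, Finset.prod_insert h, zpow_add, ih]

private lemma bil_expand {l : ℕ} (b : (Fin l → ℤ) →ₗ[ℤ] (Fin l → ℤ) →ₗ[ℤ] ℤ)
    (μ ν : Fin l → ℤ) : b μ ν = ∑ i, ν i * b μ (Pi.single i 1) := by
  conv_lhs => rw [pi_eq_sum_univ ν, map_sum]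
  refine Finset.sum_congr rfl fun i _ => ?_
  rw [map_smul, smul_eq_mul]
  congr 2
  ext j
  simp [Pi.single_apply, eq_comm]

private lemma bil_expand' {l : ℕ} (b : (Fin l → ℤ) →ₗ[ℤ] (Fin l → ℤ) →ₗ[ℤ] ℤ)
    (μ ν : Fin l → ℤ) : b ν μ = ∑ i, ν i * b (Pi.single i 1) μ := by
  conv_lhs => rw [pi_eq_sum_univ ν]
  simp only [map_sum, LinearMap.sum_apply, map_smul, LinearMap.smul_apply, smul_eq_mul]
  refine Finset.sum_congr rfl fun i _ => ?_
  congr 3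
  ext j
  simp [Pi.single_apply, eq_comm]

/-- For a `ℤ`-bilinear form `b` on `ℤ^l`, the maps
`φ_ν(t, x, v) = (t · ∏ᵢ xᵢ^{νᵢ} · v^{b(ν,ν)}, (v^{Q(ν,eᵢ)} · xᵢ)ᵢ, v)` (with
`Q(λ,μ) = b(λ,μ) + b(μ,λ)` and `eᵢ` the standard basis) satisfy `φ_0 = id` and
`φ_ν ∘ φ_{ν'} = φ_{ν+ν'}`, i.e. they define an action of the additive group `ℤ^l` on the
torus `ℂˣ × (ℂˣ)^l × ℂˣ`. -/
theorem stmt14 {l : ℕ} (b : (Fin l → ℤ) →ₗ[ℤ] (Fin l → ℤ) →ₗ[ℤ] ℤ) :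
    let φ : (Fin l → ℤ) → ℂˣ × (Fin l → ℂˣ) × ℂˣ → ℂˣ × (Fin l → ℂˣ) × ℂˣ :=
      fun ν p =>
        (p.1 * (∏ i, p.2.1 i ^ ν i) * p.2.2 ^ b ν ν,
         fun i => p.2.2 ^ (b ν (Pi.single i 1) + b (Pi.single i 1) ν) * p.2.1 i,
         p.2.2)
    (∀ p, φ 0 p = p) ∧ ∀ ν ν' : Fin l → ℤ, φ ν ∘ φ ν' = φ (ν + ν') := by
  intro φ
  constructor
  · intro p
    simp [φ]
  · intro ν ν'
    funext p
    obtain ⟨t, x, v⟩ := p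
    simp only [φ, Function.comp_apply]
    refine Prod.ext ?_ (Prod.ext (funext fun i => ?_) rfl)
    · -- first component
      simp only
      have hx : ∀ i, (v ^ (b ν' (Pi.single i 1) + b (Pi.single i 1) ν') * x i) ^ ν i
          = v ^ ((b ν' (Pi.single i 1) + b (Pi.single i 1) ν') * ν i) * x i ^ ν i := by
        intro i
        rw [mul_zpow, ← zpow_mul]
      rw [Finset.prod_congr rfl (fun i _ => hx i), Finset.prod_mul_distrib, ← zpow_fsum]
      have hsum : (∑ i, (b ν' (Pi.single i 1) + b (Pi.single i 1) ν') * ν i)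
          = b ν' ν + b ν ν' := by
        rw [bil_expand b ν' ν, bil_expand' b ν' ν]
        rw [← Finset.sum_add_distrib]
        refine Finset.sum_congr rfl fun i _ => ?_
        ring
      rw [hsum]
      have hprod : ∏ i, x i ^ (ν + ν') i = (∏ i, x i ^ ν i) * ∏ i, x i ^ ν' i := by
        rw [← Finset.prod_mul_distrib]
        exact Finset.prod_congr rfl fun i _ => by rw [Pi.add_apply, zpow_add]
      rw [hprod]
      have hb : b (ν + ν') (ν + ν') = b ν' ν' + (b ν' ν + b ν ν') + b ν ν := by
        simp only [map_add, LinearMap.add_apply]; ring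
      rw [hb]
      simp only [zpow_add]
      rw [Units.ext_iff]
      push_cast
      ring
    · -- second component
      simp only
      have : b (ν + ν') (Pi.single i 1) + b (Pi.single i 1) (ν + ν')
          = (b ν (Pi.single i 1) + b (Pi.single i 1) ν)
            + (b ν' (Pi.single i 1) + b (Pi.single i 1) ν') := by
        simp only [map_add, LinearMap.add_apply]; ring
      rw [this]
      rw [Units.ext_iff]
      push_cast [zpow_add]
      ring
end
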